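/- arXiv:1704.06737 — 12 statements merged into one kernel-verified Lean document; each statement's English description precedes it below -/
import Mathlib

section
/- Let U, V be subspaces of ℝ^n, x ∈ ℝ^n, and y = R_U(x). Then P_{U∩V}(x) = P_{U∩V}(y) and dist(x, U∩V) = dist(y, U∩V). -/
/-- Reflecting across `U` does not change the projection onto `U ⊓ V` nor the
distance to `U ⊓ V`. -/
theorem proj_inter_reflection (n : ℕ) (U V : Submodule ℝ (EuclideanSpace ℝ (Fin n)))
    (x : EuclideanSpace ℝ (Fin n))
    (y : EuclideanSpace ℝ (Fin n))
    (hy : y = 2 • (Submodule.orthogonalProjectionOnto U x : EuclideanSpace ℝ (Fin n)) - x) :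
    (Submodule.orthogonalProjectionOnto (U ⊓ V) x : EuclideanSpace ℝ (Fin n)) =
        (Submodule.orthogonalProjectionOnto (U ⊓ V) y : EuclideanSpace ℝ (Fin n)) ∧
      ‖x - (Submodule.orthogonalProjectionOnto (U ⊓ V) x : EuclideanSpace ℝ (Fin n))‖ =
        ‖y - (Submodule.orthogonalProjectionOnto (U ⊓ V) y : EuclideanSpace ℝ (Fin n))‖ := by
  have hy' : y = U.reflection x := by rw [Submodule.reflection_apply, hy, Submodule.starProjection_apply]
  set p : EuclideanSpace ℝ (Fin n) :=
    (Submodule.orthogonalProjectionOnto (U ⊓ V) x : EuclideanSpace ℝ (Fin n)) with hp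
  have hpmem : p ∈ U ⊓ V := (Submodule.orthogonalProjectionOnto (U ⊓ V) x).2
  have hproj : (Submodule.orthogonalProjectionOnto (U ⊓ V) y : EuclideanSpace ℝ (Fin n)) = p := by
    apply Submodule.eq_starProjection_of_mem_orthogonal hpmem
    have h1 : x - p ∈ (U ⊓ V)ᗮ := Submodule.sub_starProjection_mem_orthogonal x
    have h2 : y - x ∈ (U ⊓ V)ᗮ := by
      have : y - x = (2 : ℝ) • ((Submodule.orthogonalProjectionOnto U x : EuclideanSpace ℝ (Fin n)) - x) := by
        rw [hy]; module
      rw [this]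
      exact Submodule.smul_mem _ _
        (Submodule.orthogonal_le inf_le_left (Submodule.neg_mem _ (Submodule.sub_starProjection_mem_orthogonal x) |> (neg_sub x _ ▸ ·)))
    have := Submodule.add_mem _ h2 h1
    simpa [sub_add_sub_cancel] using this
  refine ⟨hproj.symm, ?_⟩
  rw [hproj]
  have hfix : U.reflection p = p := Submodule.reflection_mem_subspace_eq_self hpmem.1
  calc ‖x - p‖ = ‖U.reflection (x - p)‖ := ((U.reflection).norm_map _).symm
    _ = ‖y - p‖ := by rw [map_sub, hfix, hy']
end

section
/- Let U, V be subspaces of ℝ^n and T = (Id + R_V R_U)/2 the Douglas–Rachford operator. Then for every x ∈ ℝ^n and every k ∈ ℕ, P_{U∩V}(T^k(x)) = P_{U∩V}(x). -/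
open RealInnerProductSpace

lemma refl_inner_eq {n : ℕ} (W : Submodule ℝ (EuclideanSpace ℝ (Fin n)))
    (x w : EuclideanSpace ℝ (Fin n)) (hw : w ∈ W) :
    ⟪(2 • (Submodule.orthogonalProjectionOnto W x : EuclideanSpace ℝ (Fin n)) - x), w⟫ = ⟪x, w⟫ := by
  have h := W.starProjection_inner_eq_zero x w hw
  rw [Submodule.starProjection_apply] at h
  rw [inner_sub_left] at h
  rw [inner_sub_left, two_smul, inner_add_left]
  linarith [h]

/-- The Douglas–Rachford operator `T = (Id + R_V R_U)/2` preserves the projection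
onto `U ⊓ V` along its iterates. -/
theorem proj_inter_DR_iterates (n : ℕ) (U V : Submodule ℝ (EuclideanSpace ℝ (Fin n)))
    (RU RV T : EuclideanSpace ℝ (Fin n) → EuclideanSpace ℝ (Fin n))
    (hRU : ∀ x, RU x = 2 • (Submodule.orthogonalProjectionOnto U x : EuclideanSpace ℝ (Fin n)) - x)
    (hRV : ∀ x, RV x = 2 • (Submodule.orthogonalProjectionOnto V x : EuclideanSpace ℝ (Fin n)) - x)
    (hT : ∀ x, T x = (2 : ℝ)⁻¹ • (x + RV (RU x)))
    (x : EuclideanSpace ℝ (Fin n)) (k : ℕ) :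
    (Submodule.orthogonalProjectionOnto (U ⊓ V) (T^[k] x) : EuclideanSpace ℝ (Fin n)) =
      (Submodule.orthogonalProjectionOnto (U ⊓ V) x : EuclideanSpace ℝ (Fin n)) := by
  induction k with
  | zero => simp
  | succ k ih =>
    rw [Function.iterate_succ_apply']
    set y := T^[k] x with hy
    rw [← ih]
    have hdiff : T y - y ∈ (U ⊓ V)ᗮ := by
      intro w hw
      obtain ⟨hwU, hwV⟩ := hw
      have h1 : ⟪RU y, w⟫ = ⟪y, w⟫ := by rw [hRU]; exact refl_inner_eq U y w hwU
      have h2 : ⟪RV (RU y), w⟫ = ⟪RU y, w⟫ := by rw [hRV]; exact refl_inner_eq V _ w hwV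
      rw [real_inner_comm, inner_sub_left, hT, inner_smul_left, inner_add_left, h2, h1]
      simp only [starRingEnd_apply, star_trivial]
      ring
    have h0 : Submodule.orthogonalProjectionOnto (U ⊓ V) (T y - y) = 0 :=
      Submodule.orthogonalProjectionOnto_apply_of_mem_orthogonal hdiff
    have := map_sub (Submodule.orthogonalProjectionOnto (U ⊓ V)) (T y) y
    rw [h0] at this
    have := sub_eq_zero.mp this.symm
    exact_mod_cast congrArg (Subtype.val) this
end

section
/- Let U, V be subspaces of ℝ^n, x ∈ ℝ^n, y = R_U(x), z = R_V(y), and let W be the affine span of {x, y, z}. Then for every w ∈ U ∩ V, the orthogonal projection of w onto W is equidistant from x, y, and z. -/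
open RealInnerProductSpace
lemma reflect_dist_aux {n : ℕ} (U : Submodule ℝ (EuclideanSpace ℝ (Fin n)))
    [U.HasOrthogonalProjection] (x w : EuclideanSpace ℝ (Fin n)) (hw : w ∈ U) :
    dist w (2 • (Submodule.orthogonalProjectionOnto U x : EuclideanSpace ℝ (Fin n)) - x) = dist w x := by
  set p : EuclideanSpace ℝ (Fin n) := (Submodule.orthogonalProjectionOnto U x : EuclideanSpace ℝ (Fin n)) with hp
  have hq : x - p ∈ Uᗮ := Submodule.sub_starProjection_mem_orthogonal (K := U) x
  have hwp : w - p ∈ U := U.sub_mem hw (by rw [hp]; exact (Submodule.orthogonalProjectionOnto U x).2)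
  have hinner : (inner ℝ (w - p) (x - p) : ℝ) = 0 :=
    (Submodule.mem_orthogonal U (x - p)).mp hq (w - p) hwp
  have h1 : w - (2 • p - x) = (w - p) + (x - p) := by
    rw [two_smul]; abel
  have h2 : w - x = (w - p) - (x - p) := by abel
  have hsq : ‖(w - p) + (x - p)‖ ^ 2 = ‖(w - p) - (x - p)‖ ^ 2 := by
    have e1 := norm_add_sq_real (w - p) (x - p)
    have e2 := norm_sub_sq_real (w - p) (x - p)
    rw [hinner] at e1 e2
    rw [e1, e2]; ring
  rw [dist_eq_norm, dist_eq_norm, h1, h2]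
  exact (sq_eq_sq₀ (norm_nonneg _) (norm_nonneg _)).mp hsq


/-- Projecting any `w ∈ U ∩ V` onto the affine span of `{x, R_U x, R_V R_U x}` yields a
point equidistant from `x`, `y = R_U x` and `z = R_V y`. -/
theorem proj_affineSpan_equidistant (n : ℕ) (U V : Submodule ℝ (EuclideanSpace ℝ (Fin n)))
    (x y z : EuclideanSpace ℝ (Fin n))
    (hy : y = 2 • (Submodule.orthogonalProjectionOnto U x : EuclideanSpace ℝ (Fin n)) - x)
    (hz : z = 2 • (Submodule.orthogonalProjectionOnto V y : EuclideanSpace ℝ (Fin n)) - y)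
    (w : EuclideanSpace ℝ (Fin n)) (hw : w ∈ U ⊓ V) :
    ‖(EuclideanGeometry.orthogonalProjection (affineSpan ℝ {x, y, z}) w :
        EuclideanSpace ℝ (Fin n)) - x‖ =
      ‖(EuclideanGeometry.orthogonalProjection (affineSpan ℝ {x, y, z}) w :
        EuclideanSpace ℝ (Fin n)) - y‖ ∧
    ‖(EuclideanGeometry.orthogonalProjection (affineSpan ℝ {x, y, z}) w :
        EuclideanSpace ℝ (Fin n)) - y‖ =
      ‖(EuclideanGeometry.orthogonalProjection (affineSpan ℝ {x, y, z}) w :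
        EuclideanSpace ℝ (Fin n)) - z‖ := by
  obtain ⟨hwU, hwV⟩ := hw
  have hdxy : dist w y = dist w x := by rw [hy]; exact reflect_dist_aux U x w hwU
  have hdyz : dist w z = dist w y := by rw [hz]; exact reflect_dist_aux V y w hwV
  set s := affineSpan ℝ ({x, y, z} : Set (EuclideanSpace ℝ (Fin n))) with hs
  have hxs : x ∈ s := subset_affineSpan ℝ _ (by simp)
  have hys : y ∈ s := subset_affineSpan ℝ _ (by simp)
  have hzs : z ∈ s := subset_affineSpan ℝ _ (by simp)
  set q : EuclideanSpace ℝ (Fin n) :=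
    (EuclideanGeometry.orthogonalProjection s w : EuclideanSpace ℝ (Fin n)) with hq
  have key : ∀ a : EuclideanSpace ℝ (Fin n), a ∈ s →
      dist a q * dist a q = dist a w * dist a w - dist w q * dist w q := by
    intro a ha
    have h := EuclideanGeometry.dist_sq_eq_dist_orthogonalProjection_sq_add_dist_orthogonalProjection_sq
      (s := s) w ha
    rw [← hq] at h
    linarith
  have e1 : dist x q * dist x q = dist y q * dist y q := by
    rw [key x hxs, key y hys, dist_comm x w, dist_comm y w, hdxy]
  have e2 : dist y q * dist y q = dist z q * dist z q := by
    rw [key y hys, key z hzs, dist_comm y w, dist_comm z w, hdyz]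
  have f1 : dist x q = dist y q := by
    have h := (sq_eq_sq₀ (dist_nonneg : (0:ℝ) ≤ dist x q) (dist_nonneg : (0:ℝ) ≤ dist y q)).mp
    rw [sq, sq] at h; exact h e1
  have f2 : dist y q = dist z q := by
    have h := (sq_eq_sq₀ (dist_nonneg : (0:ℝ) ≤ dist y q) (dist_nonneg : (0:ℝ) ≤ dist z q)).mp
    rw [sq, sq] at h; exact h e2
  constructor
  · rw [norm_sub_rev, norm_sub_rev q y, ← dist_eq_norm, ← dist_eq_norm]
    exact f1
  · rw [norm_sub_rev, norm_sub_rev q z, ← dist_eq_norm, ← dist_eq_norm]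
    exact f2
end

section
/- Let U, V be subspaces of ℝ^n, x ∈ ℝ^n, y = R_U(x), z = R_V(y), and W = aff{x,y,z}. Then the orthogonal projection P_W(w) is the same point for all w ∈ U ∩ V; in particular P_W(P_{U∩V}(x)) is equidistant to x, y, z. -/
open RealInnerProductSpace

/-- Reflection across a subspace preserves distance to points of the subspace. -/
lemma refl_dist_aux {F : Type*} [NormedAddCommGroup F] [InnerProductSpace ℝ F]
    (K : Submodule ℝ F) [K.HasOrthogonalProjection] (x w : F) (hw : w ∈ K) :
    ‖w - (2 • (Submodule.orthogonalProjection K x : F) - x)‖ = ‖w - x‖ := by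
  set a : F := (Submodule.orthogonalProjection K x : F) with ha
  have hinner : ⟪w - a, x - a⟫ = 0 := by
    have := Submodule.starProjection_inner_eq_zero x (w - a)
      (Submodule.sub_mem K hw (Submodule.orthogonalProjection K x).2)
    rw [Submodule.starProjection_apply] at this
    rw [real_inner_comm] at this
    exact this
  have h1 : w - (2 • a - x) = (w - a) + (x - a) := by module
  have h2 : w - x = (w - a) - (x - a) := by module
  have hsq : ‖w - (2 • a - x)‖ ^ 2 = ‖w - x‖ ^ 2 := by
    rw [h1, h2]
    have e1 := norm_add_sq_real (w - a) (x - a)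
    have e2 := norm_sub_sq_real (w - a) (x - a)
    rw [hinner] at e1 e2
    linarith
  nlinarith [norm_nonneg (w - (2 • a - x)), norm_nonneg (w - x)]

/-- The projection onto `W = aff{x, y, z}` is the same point for all `w ∈ U ∩ V`, and in
particular `P_W (P_{U∩V} x)` is equidistant to `x`, `y`, `z`. -/
theorem proj_affineSpan_const_on_inter (n : ℕ) (U V : Submodule ℝ (EuclideanSpace ℝ (Fin n)))
    (x y z : EuclideanSpace ℝ (Fin n))
    (hy : y = 2 • (Submodule.orthogonalProjection U x : EuclideanSpace ℝ (Fin n)) - x)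
    (hz : z = 2 • (Submodule.orthogonalProjection V y : EuclideanSpace ℝ (Fin n)) - y) :
    (∀ w₁ ∈ U ⊓ V, ∀ w₂ ∈ U ⊓ V,
        (EuclideanGeometry.orthogonalProjection (affineSpan ℝ {x, y, z}) w₁ :
          EuclideanSpace ℝ (Fin n)) =
        (EuclideanGeometry.orthogonalProjection (affineSpan ℝ {x, y, z}) w₂ :
          EuclideanSpace ℝ (Fin n))) ∧
    (‖(EuclideanGeometry.orthogonalProjection (affineSpan ℝ {x, y, z})
          ((Submodule.orthogonalProjection (U ⊓ V) x : EuclideanSpace ℝ (Fin n))) :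
          EuclideanSpace ℝ (Fin n)) - x‖ =
        ‖(EuclideanGeometry.orthogonalProjection (affineSpan ℝ {x, y, z})
          ((Submodule.orthogonalProjection (U ⊓ V) x : EuclideanSpace ℝ (Fin n))) :
          EuclideanSpace ℝ (Fin n)) - y‖ ∧
      ‖(EuclideanGeometry.orthogonalProjection (affineSpan ℝ {x, y, z})
          ((Submodule.orthogonalProjection (U ⊓ V) x : EuclideanSpace ℝ (Fin n))) :
          EuclideanSpace ℝ (Fin n)) - y‖ =
        ‖(EuclideanGeometry.orthogonalProjection (affineSpan ℝ {x, y, z})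
          ((Submodule.orthogonalProjection (U ⊓ V) x : EuclideanSpace ℝ (Fin n))) :
          EuclideanSpace ℝ (Fin n)) - z‖) := by
  set s : AffineSubspace ℝ (EuclideanSpace ℝ (Fin n)) := affineSpan ℝ {x, y, z} with hs
  have hxs : x ∈ s := subset_affineSpan ℝ _ (by simp)
  have hys : y ∈ s := subset_affineSpan ℝ _ (by simp)
  have hzs : z ∈ s := subset_affineSpan ℝ _ (by simp)
  haveI : Nonempty s := ⟨⟨x, hxs⟩⟩
  -- orthogonality of x - y and y - z to U and V respectively
  have h1 : ∀ w ∈ U, ⟪x - y, w⟫ = 0 := by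
    intro w hw
    have hxy : x - y = (2 : ℝ) • (x - (Submodule.orthogonalProjection U x : EuclideanSpace ℝ (Fin n))) := by
      rw [hy]; module
    rw [hxy, real_inner_smul_left]
    have := Submodule.starProjection_inner_eq_zero x w hw
    rw [Submodule.starProjection_apply] at this
    rw [this, mul_zero]
  have h2 : ∀ w ∈ V, ⟪y - z, w⟫ = 0 := by
    intro w hw
    have hyz : y - z = (2 : ℝ) • (y - (Submodule.orthogonalProjection V y : EuclideanSpace ℝ (Fin n))) := by
      rw [hz]; module
    rw [hyz, real_inner_smul_left]
    have := Submodule.starProjection_inner_eq_zero y w hw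
    rw [Submodule.starProjection_apply] at this
    rw [this, mul_zero]
  have key : ∀ a ∈ ({x, y, z} : Set (EuclideanSpace ℝ (Fin n))),
      ∀ b ∈ ({x, y, z} : Set (EuclideanSpace ℝ (Fin n))),
      ∀ w ∈ U ⊓ V, ⟪a - b, w⟫ = 0 := by
    intro a ha b hb w hw
    obtain ⟨hwU, hwV⟩ := Submodule.mem_inf.mp hw
    have hyx : ⟪y - x, w⟫ = 0 := by
      rw [← neg_sub, inner_neg_left, h1 w hwU, neg_zero]
    have hzy : ⟪z - y, w⟫ = 0 := by
      rw [← neg_sub, inner_neg_left, h2 w hwV, neg_zero]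
    have hxz : ⟪x - z, w⟫ = 0 := by
      have h : x - z = (x - y) + (y - z) := by abel
      rw [h, inner_add_left, h1 w hwU, h2 w hwV, add_zero]
    have hzx : ⟪z - x, w⟫ = 0 := by
      rw [← neg_sub, inner_neg_left, hxz, neg_zero]
    rcases ha with rfl | rfl | rfl <;> rcases hb with rfl | rfl | rfl
    · rw [sub_self]; exact inner_zero_left w
    · exact h1 w hwU
    · exact hxz
    · exact hyx
    · rw [sub_self]; exact inner_zero_left w
    · exact h2 w hwV
    · exact hzx
    · exact hzy
    · rw [sub_self]; exact inner_zero_left w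
  -- differences of points of U ⊓ V are orthogonal to the direction of s
  have hdir : ∀ w₁ ∈ U ⊓ V, ∀ w₂ ∈ U ⊓ V, w₁ - w₂ ∈ s.directionᗮ := by
    intro w₁ hw₁ w₂ hw₂
    rw [Submodule.mem_orthogonal]
    intro u hu
    rw [hs, direction_affineSpan, vectorSpan_def] at hu
    have hsub : w₁ - w₂ ∈ U ⊓ V := Submodule.sub_mem _ hw₁ hw₂
    have hle : Submodule.span ℝ
        (({x, y, z} : Set (EuclideanSpace ℝ (Fin n))) -ᵥ
          ({x, y, z} : Set (EuclideanSpace ℝ (Fin n)))) ≤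
        (Submodule.span ℝ ({w₁ - w₂} : Set (EuclideanSpace ℝ (Fin n))))ᗮ := by
      rw [Submodule.span_le]
      rintro v ⟨a, ha, b, hb, rfl⟩
      rw [SetLike.mem_coe, Submodule.mem_orthogonal]
      intro c hc
      rw [Submodule.mem_span_singleton] at hc
      obtain ⟨r, rfl⟩ := hc
      simp only [vsub_eq_sub]
      rw [real_inner_smul_left, real_inner_comm, key a ha b hb _ hsub, mul_zero]
    have h := (Submodule.mem_orthogonal _ _).mp (hle hu) (w₁ - w₂)
      (Submodule.mem_span_singleton_self _)
    rwa [real_inner_comm]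
  -- Part 1
  have part1 : ∀ w₁ ∈ U ⊓ V, ∀ w₂ ∈ U ⊓ V,
      (EuclideanGeometry.orthogonalProjection s w₁ : EuclideanSpace ℝ (Fin n)) =
      (EuclideanGeometry.orthogonalProjection s w₂ : EuclideanSpace ℝ (Fin n)) := by
    intro w₁ hw₁ w₂ hw₂
    have hv : w₁ = (w₁ - w₂) +ᵥ w₂ := by
      rw [vadd_eq_add]; abel
    conv_lhs => rw [hv]
    rw [ContinuousAffineMap.map_vadd]
    have hz0 : (EuclideanGeometry.orthogonalProjection s).contLinear (w₁ - w₂) = 0 := by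
      show (EuclideanGeometry.orthogonalProjection s).linear (w₁ - w₂) = 0
      rw [EuclideanGeometry.orthogonalProjection_linear]
      exact Submodule.orthogonalProjectionOnto_apply_of_mem_orthogonal
        (hdir w₁ hw₁ w₂ hw₂)
    rw [hz0]
    simp
  refine ⟨part1, ?_⟩
  -- Part 2
  set p : EuclideanSpace ℝ (Fin n) := (Submodule.orthogonalProjection (U ⊓ V) x :
    EuclideanSpace ℝ (Fin n)) with hp
  have hpm : p ∈ U ⊓ V := (Submodule.orthogonalProjection (U ⊓ V) x).2
  obtain ⟨hpU, hpV⟩ := Submodule.mem_inf.mp hpm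
  set q : EuclideanSpace ℝ (Fin n) := (EuclideanGeometry.orthogonalProjection s p :
    EuclideanSpace ℝ (Fin n)) with hq
  have dxy : ‖p - y‖ = ‖p - x‖ := by rw [hy]; exact refl_dist_aux U x p hpU
  have dyz : ‖p - z‖ = ‖p - y‖ := by rw [hz]; exact refl_dist_aux V y p hpV
  have pyth : ∀ t : EuclideanSpace ℝ (Fin n), t ∈ s →
      ‖q - t‖ ^ 2 = ‖p - t‖ ^ 2 - ‖p - q‖ ^ 2 := by
    intro t ht
    have hpq : p - q ∈ s.directionᗮ := by
      have := EuclideanGeometry.vsub_orthogonalProjection_mem_direction_orthogonal s p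
      rwa [vsub_eq_sub] at this
    have hqt : q - t ∈ s.direction := by
      have := AffineSubspace.vsub_mem_direction
        (EuclideanGeometry.orthogonalProjection_mem p) ht
      rwa [vsub_eq_sub] at this
    have hinner : ⟪p - q, q - t⟫ = 0 := by
      rw [real_inner_comm]
      exact (Submodule.mem_orthogonal s.direction (p - q)).mp hpq (q - t) hqt
    have hdec : p - t = (p - q) + (q - t) := by abel
    rw [show ‖p - t‖ ^ 2 = ‖(p - q) + (q - t)‖ ^ 2 by rw [← hdec],
      norm_add_sq_real, hinner]
    ring
  have e1 : ‖q - x‖ ^ 2 = ‖q - y‖ ^ 2 := by rw [pyth x hxs, pyth y hys, dxy]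
  have e2 : ‖q - y‖ ^ 2 = ‖q - z‖ ^ 2 := by rw [pyth y hys, pyth z hzs, dyz]
  have sqrt_eq : ∀ u v : EuclideanSpace ℝ (Fin n), ‖u‖ ^ 2 = ‖v‖ ^ 2 → ‖u‖ = ‖v‖ := by
    intro u v h
    have h' : Real.sqrt (‖u‖ ^ 2) = Real.sqrt (‖v‖ ^ 2) := by rw [h]
    rwa [Real.sqrt_sq (norm_nonneg _), Real.sqrt_sq (norm_nonneg _)] at h'
  exact ⟨sqrt_eq _ _ e1, sqrt_eq _ _ e2⟩
end

section
/- Let U, V be subspaces of ℝ^n, x ∈ ℝ^n, y = R_U(x), z = R_V(y). The points x, y, z cannot be pairwise distinct and collinear; i.e., if x, y, z are pairwise distinct then they are affinely independent. -/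
/-- The points `x`, `y = R_U x`, `z = R_V y` cannot be pairwise distinct and collinear:
if they are pairwise distinct then they are affinely independent. -/
theorem reflections_affineIndependent (n : ℕ) (U V : Submodule ℝ (EuclideanSpace ℝ (Fin n)))
    (x y z : EuclideanSpace ℝ (Fin n))
    (hy : y = 2 • (Submodule.orthogonalProjectionOnto U x : EuclideanSpace ℝ (Fin n)) - x)
    (hz : z = 2 • (Submodule.orthogonalProjectionOnto V y : EuclideanSpace ℝ (Fin n)) - y)
    (hxy : x ≠ y) (hyz : y ≠ z) (hxz : x ≠ z) :
    AffineIndependent ℝ ![x, y, z] := by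
  have hy' : y = Submodule.reflection U x := by
    rw [Submodule.reflection_apply, Submodule.starProjection_apply, hy]
  have hz' : z = Submodule.reflection V y := by
    rw [Submodule.reflection_apply, Submodule.starProjection_apply, hz]
  have hnxy : ‖y‖ = ‖x‖ := by rw [hy']; exact (Submodule.reflection U).norm_map x
  have hnyz : ‖z‖ = ‖x‖ := by rw [hz', (Submodule.reflection V).norm_map y]; exact hnxy
  rw [show (![x, y, z] : Fin 3 → EuclideanSpace ℝ (Fin n)) = ![x, y, z] from rfl,
    affineIndependent_iff_not_collinear]
  intro hcol
  have hcol' : Collinear ℝ ({x, y, z} : Set (EuclideanSpace ℝ (Fin n))) := by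
    convert hcol using 2
    rw [← Set.image_univ]
    simp [Set.image_univ, Set.range_comp]
    ext w
    simp [Fin.exists_fin_succ, Matrix.cons_val_zero, Matrix.cons_val_one]
    tauto
  have hx : x ∈ ({x, y, z} : Set (EuclideanSpace ℝ (Fin n))) := by simp
  rw [collinear_iff_of_mem hx] at hcol'
  obtain ⟨v, hv⟩ := hcol'
  obtain ⟨a, ha⟩ := hv y (by simp)
  obtain ⟨b, hb⟩ := hv z (by simp)
  have ha0 : a ≠ 0 := by rintro rfl; simp at ha; exact hxy ha.symm
  set t : ℝ := b / a with ht
  have hyx : y - x = a • v := by rw [ha, vadd_eq_add]; abel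
  have hzt : z = x + t • (y - x) := by
    rw [hb, hyx, smul_smul, div_mul_cancel₀ _ ha0, vadd_eq_add]; abel
  have ht0 : t ≠ 0 := by
    intro h; apply hxz; rw [hzt, h]; simp
  have ht1 : t ≠ 1 := by
    intro h; apply hyz; rw [hzt, h, one_smul]; abel
  have hdn : y - x ≠ 0 := sub_ne_zero.mpr (Ne.symm hxy)
  have hdpos : (0:ℝ) < ‖y - x‖ ^ 2 := pow_pos (norm_pos_iff.mpr hdn) 2
  have h1 : ‖y‖ ^ 2 = ‖x‖ ^ 2 + 2 * inner ℝ x (y - x) + ‖y - x‖ ^ 2 := by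
    have e : y = x + (y - x) := by abel
    nth_rewrite 1 [e]
    rw [norm_add_sq_real]
  have h2 : ‖z‖ ^ 2 = ‖x‖ ^ 2 + 2 * (t * inner ℝ x (y - x)) + t ^ 2 * ‖y - x‖ ^ 2 := by
    rw [hzt, norm_add_sq_real, real_inner_smul_right, norm_smul, Real.norm_eq_abs,
      mul_pow, sq_abs]
  have e1 : (2:ℝ) * inner ℝ x (y - x) + ‖y - x‖ ^ 2 = 0 := by
    have := h1; rw [hnxy] at this; linarith
  have e2 : t * (t - 1) * ‖y - x‖ ^ 2 = 0 := by
    have h2' : 2 * (t * inner ℝ x (y - x)) + t ^ 2 * ‖y - x‖ ^ 2 = 0 := by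
      have := h2; rw [hnyz] at this; linarith
    linear_combination h2' - t * e1
  rcases mul_eq_zero.mp e2 with h | h
  · rcases mul_eq_zero.mp h with h | h
    · exact ht0 h
    · exact ht1 (by linarith)
  · linarith
end

section
/- Let U, V be subspaces of ℝ^n and define the circumcenter operator C_T(x) as the unique point in aff{x, R_U(x), R_V R_U(x)} equidistant from x, R_U(x), and R_V R_U(x). Then C_T(x) = x if and only if x ∈ U ∩ V. -/
/-- If `c` is the circumcenter of `{x, R_U x, R_V R_U x}`, i.e. the point of
`aff{x, y, z}` equidistant from `x`, `y`, `z`, then `c = x` iff `x ∈ U ∩ V`. -/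
theorem circumcenter_fixed_iff (n : ℕ) (U V : Submodule ℝ (EuclideanSpace ℝ (Fin n)))
    (x y z c : EuclideanSpace ℝ (Fin n))
    (hy : y = 2 • (U.orthogonalProjectionOnto x : EuclideanSpace ℝ (Fin n)) - x)
    (hz : z = 2 • (V.orthogonalProjectionOnto y : EuclideanSpace ℝ (Fin n)) - y)
    (hc : c ∈ affineSpan ℝ ({x, y, z} : Set (EuclideanSpace ℝ (Fin n))))
    (hcx : ‖c - x‖ = ‖c - y‖) (hcz : ‖c - x‖ = ‖c - z‖) :
    c = x ↔ x ∈ U ⊓ V := by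
  constructor
  · intro hcx'
    subst hcx'
    have hy' : y = c := by
      have h0 : ‖c - y‖ = 0 := by rw [← hcx]; simp
      have h1 := norm_eq_zero.mp h0
      linear_combination (norm := module) -h1
    have hz' : z = c := by
      have h0 : ‖c - z‖ = 0 := by rw [← hcz]; simp
      have h1 := norm_eq_zero.mp h0
      linear_combination (norm := module) -h1
    rw [hy'] at hy hz
    rw [hz'] at hz
    have hU : (U.orthogonalProjectionOnto c : EuclideanSpace ℝ (Fin n)) = c := by
      linear_combination (norm := module) (-1/2 : ℝ) • hy
    have hV : (V.orthogonalProjectionOnto c : EuclideanSpace ℝ (Fin n)) = c := by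
      linear_combination (norm := module) (-1/2 : ℝ) • hz
    exact ⟨Submodule.starProjection_eq_self_iff.mp hU, Submodule.starProjection_eq_self_iff.mp hV⟩
  · intro hx
    obtain ⟨hxU, hxV⟩ := hx
    have hy' : y = x := by
      rw [hy, U.coe_orthogonalProjectionOnto_apply, Submodule.starProjection_eq_self_iff.mpr hxU]
      module
    have hz' : z = x := by
      rw [hz, hy', V.coe_orthogonalProjectionOnto_apply, Submodule.starProjection_eq_self_iff.mpr hxV]
      module
    rw [hy', hz'] at hc
    simp at hc
    simpa using hc
end

section
/- Let U, V be subspaces of ℝ^n, x ∈ ℝ^n, and let C_T(x) = P_{W}(P_{U∩V}(x)) where W = aff{x, R_U(x), R_V R_U(x)}. Then P_{U∩V}(C_T(x)) = P_{U∩V}(x). -/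
open RealInnerProductSpace

/-- Reflecting across `U` doesn't change the projection onto a subspace `K ≤ U`. -/
lemma proj_reflect_le (n : ℕ) (K U : Submodule ℝ (EuclideanSpace ℝ (Fin n))) (hKU : K ≤ U)
    (x : EuclideanSpace ℝ (Fin n)) :
    (Submodule.orthogonalProjectionOnto K (2 • (Submodule.orthogonalProjectionOnto U x : EuclideanSpace ℝ (Fin n)) - x)
      : EuclideanSpace ℝ (Fin n)) = Submodule.orthogonalProjectionOnto K x := by
  set p := (Submodule.orthogonalProjectionOnto K x : EuclideanSpace ℝ (Fin n)) with hp
  have hpmem : p ∈ K := (Submodule.orthogonalProjectionOnto K x).2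
  refine Submodule.eq_starProjection_of_mem_of_inner_eq_zero hpmem ?_
  intro w hw
  have hxw : ⟪x - p, w⟫ = 0 := Submodule.starProjection_inner_eq_zero x w hw
  have hpU : (Submodule.orthogonalProjectionOnto U p : EuclideanSpace ℝ (Fin n)) = p :=
    Submodule.starProjection_eq_self_iff.mpr (hKU hpmem)
  have hwU : (Submodule.orthogonalProjectionOnto U w : EuclideanSpace ℝ (Fin n)) = w :=
    Submodule.starProjection_eq_self_iff.mpr (hKU hw)
  have hPU : ⟪(Submodule.orthogonalProjectionOnto U x : EuclideanSpace ℝ (Fin n)) - p, w⟫ = 0 := by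
    calc ⟪(Submodule.orthogonalProjectionOnto U x : EuclideanSpace ℝ (Fin n)) - p, w⟫
        = ⟪((Submodule.orthogonalProjectionOnto U (x - p) : EuclideanSpace ℝ (Fin n)) : EuclideanSpace ℝ (Fin n)), w⟫ := by
          rw [map_sub]; push_cast [hpU]; ring_nf
      _ = ⟪x - p, w⟫ := by rw [Submodule.coe_orthogonalProjectionOnto_apply, Submodule.inner_starProjection_left_eq_right, Submodule.starProjection_eq_self_iff.mpr (hKU hw)]
      _ = 0 := hxw
  have : (2 • (Submodule.orthogonalProjectionOnto U x : EuclideanSpace ℝ (Fin n)) - x) - p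
      = (2 : ℝ) • ((Submodule.orthogonalProjectionOnto U x : EuclideanSpace ℝ (Fin n)) - p) - (x - p) := by
    push_cast
    module
  rw [this, inner_sub_left, inner_smul_left, hPU, hxw]
  simp

/-- The circumcenter `C_T x = P_W (P_{U∩V} x)`, with `W = aff{x, R_U x, R_V R_U x}`,
has the same projection onto `U ∩ V` as `x`. -/
theorem proj_inter_circumcenter (n : ℕ) (U V : Submodule ℝ (EuclideanSpace ℝ (Fin n)))
    (x y z cT : EuclideanSpace ℝ (Fin n))
    (hy : y = 2 • (Submodule.orthogonalProjectionOnto U x : EuclideanSpace ℝ (Fin n)) - x)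
    (hz : z = 2 • (Submodule.orthogonalProjectionOnto V y : EuclideanSpace ℝ (Fin n)) - y)
    (hcT : cT = (EuclideanGeometry.orthogonalProjection (affineSpan ℝ {x, y, z})
        ((Submodule.orthogonalProjectionOnto (U ⊓ V) x : EuclideanSpace ℝ (Fin n))) :
        EuclideanSpace ℝ (Fin n))) :
    (Submodule.orthogonalProjectionOnto (U ⊓ V) cT : EuclideanSpace ℝ (Fin n)) =
      (Submodule.orthogonalProjectionOnto (U ⊓ V) x : EuclideanSpace ℝ (Fin n)) := by
  set p := (Submodule.orthogonalProjectionOnto (U ⊓ V) x : EuclideanSpace ℝ (Fin n)) with hp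
  have hPy : (Submodule.orthogonalProjectionOnto (U ⊓ V) y : EuclideanSpace ℝ (Fin n)) = p := by
    rw [hy]
    exact proj_reflect_le n (U ⊓ V) U inf_le_left x
  have hPz : (Submodule.orthogonalProjectionOnto (U ⊓ V) z : EuclideanSpace ℝ (Fin n)) = p := by
    rw [hz, proj_reflect_le n (U ⊓ V) V inf_le_right y, hPy]
  have hmem : cT ∈ affineSpan ℝ ({x, y, z} : Set (EuclideanSpace ℝ (Fin n))) := by
    rw [hcT]
    exact (EuclideanGeometry.orthogonalProjection (affineSpan ℝ {x, y, z}) p).2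
  let f : EuclideanSpace ℝ (Fin n) →ᵃ[ℝ] EuclideanSpace ℝ (Fin n) :=
    ((Submodule.subtypeL (U ⊓ V)).comp (Submodule.orthogonalProjectionOnto (U ⊓ V))).toLinearMap.toAffineMap
  have hle : affineSpan ℝ ({x, y, z} : Set (EuclideanSpace ℝ (Fin n))) ≤
      AffineSubspace.comap f (affineSpan ℝ ({p} : Set (EuclideanSpace ℝ (Fin n)))) := by
    rw [affineSpan_le]
    intro q hq
    simp only [Set.mem_insert_iff, Set.mem_singleton_iff] at hq
    rcases hq with rfl | rfl | rfl <;>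
      simp [AffineSubspace.mem_comap, AffineSubspace.mem_affineSpan_singleton, f, hPy, hPz, hp]
  have h2 := hle hmem
  simp only [AffineSubspace.mem_coe, AffineSubspace.mem_comap,
    AffineSubspace.mem_affineSpan_singleton] at h2
  simpa [f] using h2
end

section
/- Let U, V be subspaces of ℝ^n, T the Douglas–Rachford operator, and C_T(x) = P_W(P_{U∩V}(x)) with W = aff{x, R_U(x), R_V R_U(x)}. Then dist(C_T(x), U∩V)² = dist(T(x), U∩V)² − ‖T(x) − C_T(x)‖²; in particular dist(C_T(x), U∩V) ≤ dist(T(x), U∩V). -/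
open scoped RealInnerProductSpace


/-- `dist(C_T x, U∩V)² = dist(T x, U∩V)² - ‖T x - C_T x‖²`, and in particular
`dist(C_T x, U∩V) ≤ dist(T x, U∩V)`, where `T` is the Douglas–Rachford operator and
`C_T x` is the circumcenter of `{x, R_U x, R_V R_U x}`. -/
theorem circumcenter_improves_DR (n : ℕ) (U V : Submodule ℝ (EuclideanSpace ℝ (Fin n)))
    (x y z Tx cT : EuclideanSpace ℝ (Fin n))
    (hy : y = 2 • (Submodule.orthogonalProjection U x : EuclideanSpace ℝ (Fin n)) - x)
    (hz : z = 2 • (Submodule.orthogonalProjection V y : EuclideanSpace ℝ (Fin n)) - y)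
    (hTx : Tx = (2 : ℝ)⁻¹ • (x + z))
    (hcT : cT = (EuclideanGeometry.orthogonalProjection (affineSpan ℝ {x, y, z})
        ((Submodule.orthogonalProjection (U ⊓ V) x : EuclideanSpace ℝ (Fin n))) :
        EuclideanSpace ℝ (Fin n))) :
    ‖cT - (Submodule.orthogonalProjection (U ⊓ V) cT : EuclideanSpace ℝ (Fin n))‖ ^ 2 =
        ‖Tx - (Submodule.orthogonalProjection (U ⊓ V) Tx : EuclideanSpace ℝ (Fin n))‖ ^ 2 -
          ‖Tx - cT‖ ^ 2 ∧
      ‖cT - (Submodule.orthogonalProjection (U ⊓ V) cT : EuclideanSpace ℝ (Fin n))‖ ≤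
        ‖Tx - (Submodule.orthogonalProjection (U ⊓ V) Tx : EuclideanSpace ℝ (Fin n))‖ := by
  set p : EuclideanSpace ℝ (Fin n) := (Submodule.orthogonalProjection (U ⊓ V) x :
    EuclideanSpace ℝ (Fin n)) with hp
  set a : EuclideanSpace ℝ (Fin n) := (Submodule.orthogonalProjection U x :
    EuclideanSpace ℝ (Fin n)) with ha
  set b : EuclideanSpace ℝ (Fin n) := (Submodule.orthogonalProjection V y :
    EuclideanSpace ℝ (Fin n)) with hb
  have hpUV : p ∈ U ⊓ V := (Submodule.orthogonalProjection (U ⊓ V) x).2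
  have hpU : p ∈ U := hpUV.1
  have hpV : p ∈ V := hpUV.2
  have hxa : ∀ w ∈ U, ⟪x - a, w⟫ = 0 := fun w hw =>
    Submodule.starProjection_inner_eq_zero x w hw
  have hyb : ∀ w ∈ V, ⟪y - b, w⟫ = 0 := fun w hw =>
    Submodule.starProjection_inner_eq_zero y w hw
  have hxp : ∀ w ∈ U ⊓ V, ⟪x - p, w⟫ = 0 := fun w hw =>
    Submodule.starProjection_inner_eq_zero x w hw
  have hyx : y - x = (2:ℝ) • (a - x) := by rw [hy]; push_cast [two_smul]; module
  have hzy : z - y = (2:ℝ) • (b - y) := by rw [hz]; push_cast [two_smul]; module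
  have hyxw : ∀ w ∈ U, ⟪y - x, w⟫ = 0 := by
    intro w hw
    rw [hyx, inner_smul_left]
    have h : ⟪a - x, w⟫ = 0 := by
      rw [show a - x = -(x - a) from (neg_sub x a).symm, inner_neg_left, hxa w hw, neg_zero]
    simp [h]
  have hzyw : ∀ w ∈ V, ⟪z - y, w⟫ = 0 := by
    intro w hw
    rw [hzy, inner_smul_left]
    have h : ⟪b - y, w⟫ = 0 := by
      rw [show b - y = -(y - b) from (neg_sub y b).symm, inner_neg_left, hyb w hw, neg_zero]
    simp [h]
  have hTxp : ∀ w ∈ U ⊓ V, ⟪Tx - p, w⟫ = 0 := by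
    intro w hw
    have hdecomp : Tx - p = (x - p) + (2:ℝ)⁻¹ • (z - y) + (2:ℝ)⁻¹ • (y - x) := by
      rw [hTx]; module
    rw [hdecomp, inner_add_left, inner_add_left, inner_smul_left, inner_smul_left,
      hxp w hw, hzyw w hw.2, hyxw w hw.1]
    ring
  have hTproj : (Submodule.orthogonalProjection (U ⊓ V) Tx : EuclideanSpace ℝ (Fin n)) = p :=
    Submodule.eq_starProjection_of_mem_orthogonal hpUV
      (by rw [Submodule.mem_orthogonal']; exact hTxp)
  set W := affineSpan ℝ ({x, y, z} : Set (EuclideanSpace ℝ (Fin n))) with hW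
  have hxW : x ∈ W := mem_affineSpan ℝ (by simp)
  have hzW : z ∈ W := mem_affineSpan ℝ (by simp)
  have hTxW : Tx ∈ W := by
    have h := AffineSubspace.smul_vsub_vadd_mem W ((2:ℝ)⁻¹) hzW hxW hxW
    have heq : Tx = (2:ℝ)⁻¹ • (z -ᵥ x) +ᵥ x := by
      rw [hTx]; simp only [vsub_eq_sub, vadd_eq_add]; module
    rwa [heq]
  have hcTW : cT ∈ W := by
    rw [hcT]; exact EuclideanGeometry.orthogonalProjection_mem _
  have hdirmem : cT - Tx ∈ W.direction := by
    have h := AffineSubspace.vsub_mem_direction hcTW hTxW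
    simpa [vsub_eq_sub] using h
  have hperp : p - cT ∈ W.directionᗮ := by
    have h := EuclideanGeometry.orthogonalProjection_vsub_mem_direction_orthogonal W p
    have h2 : -(cT - p) ∈ W.directionᗮ := by
      apply Submodule.neg_mem
      rw [hcT]
      simpa [vsub_eq_sub] using h
    simpa [neg_sub] using h2
  have hupdir : ∀ u ∈ U ⊓ V, ∀ w ∈ W.direction, ⟪w, u - p⟫ = 0 := by
    intro u hu w hw
    rw [hW, direction_affineSpan] at hw
    have key : ∀ v ∈ ({x, y, z} : Set (EuclideanSpace ℝ (Fin n))),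
        ⟪v, u - p⟫ = ⟪x, u - p⟫ := by
      have hupU : u - p ∈ U := U.sub_mem hu.1 hpU
      have hupV : u - p ∈ V := V.sub_mem hu.2 hpV
      have e1 : ⟪y - x, u - p⟫ = 0 := hyxw _ hupU
      have e2 : ⟪z - y, u - p⟫ = 0 := hzyw _ hupV
      rw [inner_sub_left] at e1 e2
      intro v hv
      simp only [Set.mem_insert_iff, Set.mem_singleton_iff] at hv
      rcases hv with rfl | rfl | rfl
      · rfl
      · linarith
      · linarith
    refine Submodule.span_induction ?_ ?_ ?_ ?_ hw
    · rintro d hd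
      rcases Set.mem_vsub.1 hd with ⟨v1, hv1, v2, hv2, rfl⟩
      rw [vsub_eq_sub, inner_sub_left, key v1 hv1, key v2 hv2, sub_self]
    · simp
    · intro s t _ _ h1 h2; rw [inner_add_left, h1, h2, add_zero]
    · intro r s _ h1; rw [inner_smul_left, h1, mul_zero]
  have hcTp : ∀ w ∈ U ⊓ V, ⟪cT - p, w⟫ = 0 := by
    intro w hw
    have hu : w + p ∈ U ⊓ V := ⟨U.add_mem hw.1 hpU, V.add_mem hw.2 hpV⟩
    have h1 : ⟪cT - Tx, w⟫ = 0 := by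
      have h := hupdir (w + p) hu (cT - Tx) hdirmem
      simpa using h
    have h2 : ⟪Tx - p, w⟫ = 0 := hTxp w hw
    have hde : cT - p = (cT - Tx) + (Tx - p) := by abel
    rw [hde, inner_add_left, h1, h2, add_zero]
  have hcproj : (Submodule.orthogonalProjection (U ⊓ V) cT : EuclideanSpace ℝ (Fin n)) = p :=
    Submodule.eq_starProjection_of_mem_orthogonal hpUV
      (by rw [Submodule.mem_orthogonal']; exact hcTp)
  have hinner0 : ⟪Tx - cT, cT - p⟫ = 0 := by
    have h1 : Tx - cT ∈ W.direction := by
      have h := AffineSubspace.vsub_mem_direction hTxW hcTW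
      simpa [vsub_eq_sub] using h
    have h := (Submodule.mem_orthogonal _ (p - cT)).1 hperp (Tx - cT) h1
    rw [show cT - p = -(p - cT) from (neg_sub p cT).symm, inner_neg_right, h, neg_zero]
  have hpyth : ‖Tx - p‖ ^ 2 = ‖Tx - cT‖ ^ 2 + ‖cT - p‖ ^ 2 := by
    have hde : Tx - p = (Tx - cT) + (cT - p) := by abel
    rw [hde, norm_add_sq_real, hinner0]; ring
  rw [hTproj, hcproj]
  constructor
  · linarith
  · have h1 : ‖cT - p‖ ^ 2 ≤ ‖Tx - p‖ ^ 2 := by nlinarith [sq_nonneg ‖Tx - cT‖]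
    exact le_of_pow_le_pow_left₀ two_ne_zero (norm_nonneg _) h1
end

section
/- Let U, V be subspaces of ℝ^n and T = (Id + R_V R_U)/2 the Douglas–Rachford operator. Then dist(T^k(x), U + V) = dist(x, U + V) for all x ∈ ℝ^n and k ∈ ℕ. -/
lemma residual_eq_of_sub_mem {E : Type*} [NormedAddCommGroup E] [InnerProductSpace ℝ E]
    (W : Submodule ℝ E) [CompleteSpace W] (x y : E) (h : y - x ∈ W) :
    y - (Submodule.orthogonalProjectionOnto W y : E) = x - (Submodule.orthogonalProjectionOnto W x : E) := by
  have h1 : (Submodule.orthogonalProjectionOnto W (y - x) : E) = y - x := by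
    exact Submodule.starProjection_eq_self_iff.mpr h
  rw [map_sub] at h1
  push_cast at h1
  have : (Submodule.orthogonalProjectionOnto W y : E) - (Submodule.orthogonalProjectionOnto W x : E) = y - x := h1
  linear_combination (norm := abel) -this

/-- The Douglas–Rachford iterates preserve the distance to `U + V`. -/
theorem DR_preserves_dist_sup (n : ℕ) (U V : Submodule ℝ (EuclideanSpace ℝ (Fin n)))
    (T : EuclideanSpace ℝ (Fin n) → EuclideanSpace ℝ (Fin n))
    (hT : ∀ x, T x = (2 : ℝ)⁻¹ • (x +
      (2 • (Submodule.orthogonalProjectionOnto V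
          (2 • (Submodule.orthogonalProjectionOnto U x : EuclideanSpace ℝ (Fin n)) - x) :
          EuclideanSpace ℝ (Fin n)) -
        (2 • (Submodule.orthogonalProjectionOnto U x : EuclideanSpace ℝ (Fin n)) - x))))
    (x : EuclideanSpace ℝ (Fin n)) (k : ℕ) :
    ‖T^[k] x - (Submodule.orthogonalProjectionOnto (U ⊔ V) (T^[k] x) : EuclideanSpace ℝ (Fin n))‖ =
      ‖x - (Submodule.orthogonalProjectionOnto (U ⊔ V) x : EuclideanSpace ℝ (Fin n))‖ := by
  induction k with
  | zero => simp
  | succ k ih =>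
    rw [Function.iterate_succ_apply', ← ih]
    set y := T^[k] x with hy
    congr 1
    apply residual_eq_of_sub_mem
    rw [hT y]
    set a : EuclideanSpace ℝ (Fin n) := (Submodule.orthogonalProjectionOnto U y : EuclideanSpace ℝ (Fin n))
    set b : EuclideanSpace ℝ (Fin n) :=
      (Submodule.orthogonalProjectionOnto V (2 • a - y) : EuclideanSpace ℝ (Fin n))
    have hab : (2:ℝ)⁻¹ • (y + (2 • b - (2 • a - y))) - y = b - a := by
      have : (2:ℕ) • b = (2:ℝ) • b := by simp [two_smul]
      rw [this]
      have : (2:ℕ) • a = (2:ℝ) • a := by simp [two_smul]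
      rw [this]
      module
    rw [hab]
    exact Submodule.sub_mem _ (Submodule.mem_sup_right (Submodule.coe_mem _))
      (Submodule.mem_sup_left (Submodule.coe_mem _))
end

section
/- Let U, V be subspaces of ℝ^n and T = (Id + R_V R_U)/2. Then the fixed point set of T equals (U ∩ V) ⊕ (U⊥ ∩ V⊥); that is, T(x) = x if and only if x ∈ (U ∩ V) + (U⊥ ∩ V⊥). -/
/-- The fixed point set of the Douglas–Rachford operator `T = (Id + R_V R_U)/2` is
`(U ⊓ V) ⊔ (Uᗮ ⊓ Vᗮ)`. -/
theorem DR_fixedPoints (n : ℕ) (U V : Submodule ℝ (EuclideanSpace ℝ (Fin n)))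
    (T : EuclideanSpace ℝ (Fin n) → EuclideanSpace ℝ (Fin n))
    (hT : ∀ x, T x = (2 : ℝ)⁻¹ • (x +
      (2 • (Submodule.orthogonalProjection V
          (2 • (Submodule.orthogonalProjection U x : EuclideanSpace ℝ (Fin n)) - x) :
          EuclideanSpace ℝ (Fin n)) -
        (2 • (Submodule.orthogonalProjection U x : EuclideanSpace ℝ (Fin n)) - x))))
    (x : EuclideanSpace ℝ (Fin n)) :
    T x = x ↔ x ∈ (U ⊓ V) ⊔ (Uᗮ ⊓ Vᗮ) := by
  let E := EuclideanSpace ℝ (Fin n)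
  set u : E := (Submodule.orthogonalProjection U x : E) with hu
  set z : E := 2 • u - x with hz
  have hdiff : T x - x = (Submodule.orthogonalProjection V z : E) - u := by
    rw [hT]
    rw [hz]
    push_cast
    module
  have key : T x = x ↔ (Submodule.orthogonalProjection V z : E) = u := by
    constructor
    · intro h
      have : T x - x = 0 := by rw [h]; simp
      rw [hdiff] at this
      linear_combination (norm := module) this
    · intro h
      have : T x - x = 0 := by rw [hdiff, h]; simp
      linear_combination (norm := module) this
  rw [key]
  constructor
  · intro h
    have huU : u ∈ U := (Submodule.orthogonalProjection U x).2
    have hxu : x - u ∈ Uᗮ := Submodule.sub_starProjection_mem_orthogonal x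
    have huV : u ∈ V := h ▸ (Submodule.orthogonalProjection V z).2
    have hzV : z - u ∈ Vᗮ := by
      have : z - (Submodule.orthogonalProjection V z : E) ∈ Vᗮ := Submodule.sub_starProjection_mem_orthogonal (K := V) z
      rwa [h] at this
    have hxV : x - u ∈ Vᗮ := by
      have : z - u = -(x - u) := by rw [hz]; module
      rw [this] at hzV
      simpa using Vᗮ.neg_mem hzV
    refine Submodule.mem_sup.2 ⟨u, ⟨huU, huV⟩, x - u, ⟨hxu, hxV⟩, by abel⟩
  · intro h
    obtain ⟨a, ⟨haU, haV⟩, b, ⟨hbU, hbV⟩, hab⟩ := Submodule.mem_sup.1 h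
    have hPU : u = a := by
      rw [hu, ← hab, map_add]
      push_cast
      rw [show (Submodule.orthogonalProjection U a : E) = a from Submodule.starProjection_eq_self_iff.2 haU,
        Submodule.orthogonalProjectionOnto_apply_of_mem_orthogonal hbU]
      simp
    have hzab : z = a - b := by rw [hz, hPU, ← hab]; module
    rw [hzab, map_sub]
    push_cast
    rw [show (Submodule.orthogonalProjection V a : E) = a from Submodule.starProjection_eq_self_iff.2 haV,
      Submodule.orthogonalProjectionOnto_apply_of_mem_orthogonal hbV, hPU]
    simp
end

section
/- Let U, V be subspaces of ℝ^n and Fix T = (U ∩ V) + (U⊥ ∩ V⊥) the fixed point set of the Douglas–Rachford operator. Then for x ∈ ℝ^n, P_{U∩V}(x) = P_{Fix T}(x) if and only if x ∈ U + V. -/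
/-- `P_{U∩V} x = P_{Fix T} x` iff `x ∈ U + V`, where
`Fix T = (U ⊓ V) ⊔ (Uᗮ ⊓ Vᗮ)`. -/
theorem proj_inter_eq_proj_fix_iff (n : ℕ) (U V : Submodule ℝ (EuclideanSpace ℝ (Fin n)))
    (x : EuclideanSpace ℝ (Fin n)) :
    (Submodule.orthogonalProjection (U ⊓ V) x : EuclideanSpace ℝ (Fin n)) =
        (Submodule.orthogonalProjection ((U ⊓ V) ⊔ (Uᗮ ⊓ Vᗮ)) x : EuclideanSpace ℝ (Fin n)) ↔
      x ∈ U ⊔ V := by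
  set W := U ⊓ V with hW
  set S := U ⊔ V with hS
  have hUV : Uᗮ ⊓ Vᗮ = Sᗮ := Submodule.inf_orthogonal U V
  have hWS : W ≤ S := le_trans inf_le_left le_sup_left
  have hSoo : Sᗮᗮ = S := Submodule.orthogonal_orthogonal S
  -- key: projection onto W ⊔ Sᗮ splits
  have key : (Submodule.orthogonalProjection (W ⊔ Sᗮ) x : EuclideanSpace ℝ (Fin n)) =
      (Submodule.orthogonalProjection W x : EuclideanSpace ℝ (Fin n)) +
      (Submodule.orthogonalProjection Sᗮ x : EuclideanSpace ℝ (Fin n)) := by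
    apply Submodule.eq_starProjection_of_mem_orthogonal
    · exact Submodule.add_mem_sup (Submodule.orthogonalProjection W x).2 (Submodule.orthogonalProjection Sᗮ x).2
    · rw [← Submodule.inf_orthogonal, hSoo]
      constructor
      · -- x - (Pw + Ps) ∈ Wᗮ
        have h1 : x - (Submodule.orthogonalProjection W x : EuclideanSpace ℝ (Fin n)) ∈ Wᗮ :=
          Submodule.sub_starProjection_mem_orthogonal (K := W) x
        have h2 : (Submodule.orthogonalProjection Sᗮ x : EuclideanSpace ℝ (Fin n)) ∈ Wᗮ :=
          Submodule.orthogonal_le hWS (Submodule.orthogonalProjection Sᗮ x).2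
        have := Wᗮ.sub_mem h1 h2
        convert this using 1
        abel_nf; rfl
      · -- x - (Pw + Ps) ∈ S
        have h1 : x - (Submodule.orthogonalProjection Sᗮ x : EuclideanSpace ℝ (Fin n)) ∈ S := by
          have := Submodule.sub_starProjection_mem_orthogonal (K := Sᗮ) x
          rwa [hSoo] at this
        have h2 : (Submodule.orthogonalProjection W x : EuclideanSpace ℝ (Fin n)) ∈ S :=
          hWS (Submodule.orthogonalProjection W x).2
        have := S.sub_mem h1 h2
        convert this using 1
        abel_nf; rfl
  have hre : (Submodule.orthogonalProjection (U ⊓ V ⊔ Uᗮ ⊓ Vᗮ) x : EuclideanSpace ℝ (Fin n)) =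
      (Submodule.orthogonalProjection (W ⊔ Sᗮ) x : EuclideanSpace ℝ (Fin n)) :=
    by show (U ⊓ V ⊔ Uᗮ ⊓ Vᗮ).starProjection x = (W ⊔ Sᗮ).starProjection x; simp only [hUV, hW]
  rw [hre, key]
  constructor
  · intro h
    have hz : (Submodule.orthogonalProjection Sᗮ x : EuclideanSpace ℝ (Fin n)) = 0 :=
      (left_eq_add.mp h)
    have hz' : Submodule.orthogonalProjection Sᗮ x = 0 := Subtype.ext (by simpa using hz)
    have := Submodule.orthogonalProjectionOnto_eq_zero_iff.mp hz'
    rwa [hSoo] at this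
  · intro h
    have : Submodule.orthogonalProjection Sᗮ x = 0 := Submodule.orthogonalProjectionOnto_eq_zero_iff.mpr (by rwa [hSoo])
    rw [this]
    simp [hW]
end

section
/- Let U, V be subspaces of ℝ^n with Friedrichs cosine c_F = ‖P_V P_U − P_{U∩V}‖ < 1, and let C_T denote the circumcenter operator C_T(x) = P_{aff{x, R_U x, R_V R_U x}}(P_{U∩V}(x)). Then for any x ∈ U + V and all k ∈ ℕ, ‖C_T^k(x) − P_{U∩V}(x)‖ ≤ c_F^k · ‖x − P_{U∩V}(x)‖; in particular the circumcentered Douglas–Rachford iterates converge linearly to P_{U∩V}(x). -/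
set_option maxHeartbeats 1000000
set_option linter.unusedSectionVars false

open scoped RealInnerProductSpace

noncomputable section

variable {E : Type*} [NormedAddCommGroup E] [InnerProductSpace ℝ E] [FiniteDimensional ℝ E]

/-- Orthogonal projection onto a submodule, as a map into the ambient space. -/
noncomputable def prL (S : Submodule ℝ E) : E →L[ℝ] E := S.subtypeL ∘L Submodule.orthogonalProjectionOnto S

lemma prL_apply (S : Submodule ℝ E) (w : E) : prL S w = (Submodule.orthogonalProjectionOnto S w : E) := rfl

lemma prL_mem (S : Submodule ℝ E) (w : E) : prL S w ∈ S := (Submodule.orthogonalProjectionOnto S w).2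

lemma prL_eq_self (S : Submodule ℝ E) {w : E} (h : w ∈ S) : prL S w = w :=
  Submodule.starProjection_eq_self_iff.2 h

lemma sub_prL_mem (S : Submodule ℝ E) (w : E) : w - prL S w ∈ Sᗮ :=
  Submodule.sub_starProjection_mem_orthogonal (K := S) w

lemma prL_eq_zero (S : Submodule ℝ E) {w : E} (h : w ∈ Sᗮ) : prL S w = 0 := by
  have h2 := Submodule.orthogonalProjectionOnto_apply_of_mem_orthogonal h
  rw [prL_apply, h2, Submodule.coe_zero]

lemma inner_prL_left (S : Submodule ℝ E) (u v : E) : ⟪prL S u, v⟫ = ⟪u, prL S v⟫ :=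
  Submodule.inner_starProjection_left_eq_right S u v

lemma pythagoras {S : Submodule ℝ E} {u v : E} (hu : u ∈ S) (hv : v ∈ Sᗮ) :
    ‖u + v‖ ^ 2 = ‖u‖ ^ 2 + ‖v‖ ^ 2 := by
  have h : ⟪u, v⟫ = 0 := Submodule.inner_right_of_mem_orthogonal hu hv
  rw [norm_add_sq_real, h]; ring

/-- The Douglas–Rachford operator difference `P_V P_U - P_{U ⊓ V}`. -/
noncomputable def DRop (U V : Submodule ℝ E) : E →L[ℝ] E :=
  (V.subtypeL ∘L Submodule.orthogonalProjectionOnto V) ∘L (U.subtypeL ∘L Submodule.orthogonalProjectionOnto U) -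
    ((U ⊓ V).subtypeL ∘L Submodule.orthogonalProjectionOnto (U ⊓ V))

lemma DRop_apply (U V : Submodule ℝ E) (w : E) :
    DRop U V w = prL V (prL U w) - prL (U ⊓ V) w := rfl

lemma prL_inf_prL (U V : Submodule ℝ E) (w : E) :
    prL (U ⊓ V) (prL U w) = prL (U ⊓ V) w := by
  have h : w - prL U w ∈ (U ⊓ V)ᗮ :=
    Submodule.orthogonal_le inf_le_left (sub_prL_mem U w)
  have h2 : prL (U ⊓ V) (w - prL U w) = 0 := prL_eq_zero _ h
  rw [map_sub] at h2
  exact (sub_eq_zero.1 h2).symm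

lemma prL_V_bound (U V : Submodule ℝ E) (cF : ℝ) (hcF : cF = ‖DRop U V‖) {a : E}
    (ha : a ∈ U) (ha0 : prL (U ⊓ V) a = 0) : ‖prL V a‖ ≤ cF * ‖a‖ := by
  have h : DRop U V a = prL V a := by
    rw [DRop_apply, prL_eq_self U ha, ha0, sub_zero]
  calc ‖prL V a‖ = ‖DRop U V a‖ := by rw [h]
    _ ≤ ‖DRop U V‖ * ‖a‖ := (DRop U V).le_opNorm a
    _ = cF * ‖a‖ := by rw [hcF]

lemma perp_bound (U V : Submodule ℝ E) (cF : ℝ) (hcF : cF = ‖DRop U V‖) {b : E}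
    (hb1 : b ∈ Uᗮ) (hb2 : b ∈ U ⊔ V) : ‖b - prL V b‖ ≤ cF * ‖b‖ := by
  have hcF0 : 0 ≤ cF := hcF ▸ norm_nonneg _
  obtain ⟨u, hu, v, hv, huv⟩ := Submodule.mem_sup.1 hb2
  have hmUV : prL (U ⊓ V) u ∈ U ⊓ V := prL_mem _ u
  set m := prL (U ⊓ V) u with hm
  set u' := u - m with hu'
  set v' := v + m with hv'
  have hu'U : u' ∈ U := U.sub_mem hu hmUV.1
  have hv'V : v' ∈ V := V.add_mem hv hmUV.2
  have hu'0 : prL (U ⊓ V) u' = 0 := by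
    rw [hu', map_sub, hm, prL_eq_self _ hmUV, sub_self]
  have hb : b = u' + v' := by rw [hu', hv', ← huv]; abel
  rcases eq_or_ne u' 0 with h0 | h0
  · have : b - prL V b = 0 := by
      rw [hb, map_add, prL_eq_self V hv'V, h0, map_zero]; abel
    rw [this, norm_zero]; positivity
  -- main case
  have hub : ⟪u', b⟫ = 0 := Submodule.inner_right_of_mem_orthogonal hu'U hb1
  have key : ‖u'‖ ^ 2 = -⟪u', v'⟫ := by
    have h1 : ⟪u', u' + v'⟫ = 0 := by rw [← hb]; exact hub
    rw [inner_add_right, real_inner_self_eq_norm_sq] at h1; linarith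
  have hpv : ⟪u', v'⟫ = ⟪prL V u', v'⟫ := by
    rw [inner_prL_left, prL_eq_self V hv'V]
  have hVu' : ‖prL V u'‖ ≤ cF * ‖u'‖ := prL_V_bound U V cF hcF hu'U hu'0
  have habs : |⟪prL V u', v'⟫| ≤ ‖prL V u'‖ * ‖v'‖ := abs_real_inner_le_norm _ _
  have h2 : ‖u'‖ ^ 2 ≤ ‖prL V u'‖ * ‖v'‖ := by
    rw [key, hpv]; exact (neg_le_abs _).trans habs
  have h1 : ‖u'‖ ^ 2 ≤ cF * ‖u'‖ * ‖v'‖ := by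
    nlinarith [h2, hVu', norm_nonneg v']
  have hbsub : b - prL V b = u' - prL V u' := by
    rw [hb, map_add, prL_eq_self V hv'V]; abel
  have hD : ‖b - prL V b‖ ^ 2 = ‖u'‖ ^ 2 - ‖prL V u'‖ ^ 2 := by
    have hdecomp : prL V u' + (u' - prL V u') = u' := by abel
    have hp := pythagoras (prL_mem V u') (sub_prL_mem V u')
    rw [hdecomp] at hp
    rw [hbsub]; linarith
  have hB : ‖b‖ ^ 2 = ‖v'‖ ^ 2 - ‖u'‖ ^ 2 := by
    have hn := norm_add_sq_real u' v'
    rw [← hb] at hn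
    rw [hn, key]; ring
  -- numeric part
  have ht : 0 < ‖u'‖ := norm_pos_iff.2 h0
  have hts : ‖u'‖ ≤ cF * ‖v'‖ := by
    rcases le_or_gt ‖u'‖ (cF * ‖v'‖) with h | h
    · exact h
    · nlinarith [h1]
  have hs : 0 < ‖v'‖ := by nlinarith [hts, hcF0]
  have hB0 : 0 ≤ ‖v'‖ ^ 2 - ‖u'‖ ^ 2 := hB ▸ sq_nonneg ‖b‖
  have hQ : ‖b - prL V b‖ ^ 2 ≤ (cF * ‖b‖) ^ 2 := by
    rw [hD, mul_pow, hB]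
    have e1 : ‖u'‖ ^ 2 ≤ (cF * ‖v'‖) ^ 2 := by nlinarith [hts, ht.le]
    have e4 : 0 ≤ ((cF * ‖v'‖) ^ 2 - ‖u'‖ ^ 2) * (‖v'‖ ^ 2 - ‖u'‖ ^ 2) :=
      mul_nonneg (by linarith) hB0
    have e3 : ‖u'‖ ^ 2 * ‖u'‖ ^ 2 ≤ (‖prL V u'‖ * ‖v'‖) * (‖prL V u'‖ * ‖v'‖) :=
      mul_le_mul h2 h2 (sq_nonneg _) (by positivity)
    nlinarith [e3, e4, mul_pos hs hs]
  exact le_of_pow_le_pow_left₀ two_ne_zero (by positivity) hQ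

lemma DR_contraction (U V : Submodule ℝ E) (cF : ℝ) (hcF : cF = ‖DRop U V‖) {y : E}
    (hy : y ∈ U ⊔ V) (hy0 : prL (U ⊓ V) y = 0) :
    ‖prL V (prL U y) + ((y - prL U y) - prL V (y - prL U y))‖ ≤ cF * ‖y‖ := by
  have hcF0 : 0 ≤ cF := hcF ▸ norm_nonneg _
  set a := prL U y with ha
  set b := y - a with hb
  have haU : a ∈ U := prL_mem U y
  have ha0 : prL (U ⊓ V) a = 0 := by rw [ha, prL_inf_prL, hy0]
  have h1 : ‖prL V a‖ ≤ cF * ‖a‖ := prL_V_bound U V cF hcF haU ha0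
  have hbU : b ∈ Uᗮ := sub_prL_mem U y
  have hbS : b ∈ U ⊔ V := Submodule.sub_mem _ hy (Submodule.mem_sup_left haU)
  have h2 : ‖b - prL V b‖ ≤ cF * ‖b‖ := perp_bound U V cF hcF hbU hbS
  have hyab : y = a + b := by rw [hb]; abel
  have hy2 : ‖y‖ ^ 2 = ‖a‖ ^ 2 + ‖b‖ ^ 2 := by
    rw [hyab]; exact pythagoras haU hbU
  have hsum : ‖prL V a + (b - prL V b)‖ ^ 2 = ‖prL V a‖ ^ 2 + ‖b - prL V b‖ ^ 2 :=
    pythagoras (prL_mem V a) (sub_prL_mem V b)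
  have hQ : ‖prL V a + (b - prL V b)‖ ^ 2 ≤ (cF * ‖y‖) ^ 2 := by
    rw [hsum, mul_pow, hy2]
    nlinarith [h1, h2, norm_nonneg a, norm_nonneg b, norm_nonneg (prL V a),
      norm_nonneg (b - prL V b), hcF0]
  exact le_of_pow_le_pow_left₀ two_ne_zero (by positivity) hQ



theorem CDRM_step (n : ℕ) (U V : Submodule ℝ (EuclideanSpace ℝ (Fin n))) (cF : ℝ)
    (hcF : cF = ‖DRop U V‖)
    (RU RV CT : EuclideanSpace ℝ (Fin n) → EuclideanSpace ℝ (Fin n))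
    (hRU : ∀ w, RU w = 2 • (Submodule.orthogonalProjectionOnto U w : EuclideanSpace ℝ (Fin n)) - w)
    (hRV : ∀ w, RV w = 2 • (Submodule.orthogonalProjectionOnto V w : EuclideanSpace ℝ (Fin n)) - w)
    (hCT : ∀ w, CT w =
      (EuclideanGeometry.orthogonalProjection (affineSpan ℝ {w, RU w, RV (RU w)})
        ((Submodule.orthogonalProjectionOnto (U ⊓ V) w : EuclideanSpace ℝ (Fin n))) :
        EuclideanSpace ℝ (Fin n)))
    {x : EuclideanSpace ℝ (Fin n)} (hx : x ∈ U ⊔ V) :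
    CT x ∈ U ⊔ V ∧ prL (U ⊓ V) (CT x) = prL (U ⊓ V) x ∧
      ‖CT x - prL (U ⊓ V) x‖ ≤ cF * ‖x - prL (U ⊓ V) x‖ := by
  have hRU' : ∀ w, RU w = prL U w + prL U w - w := fun w => by
    rw [hRU w, two_smul]; rfl
  have hRV' : ∀ w, RV w = prL V w + prL V w - w := fun w => by
    rw [hRV w, two_smul]; rfl
  have hp_mem : prL (U ⊓ V) x ∈ U ⊓ V := prL_mem _ x
  set p := prL (U ⊓ V) x with hp
  set A := affineSpan ℝ ({x, RU x, RV (RU x)} : Set (EuclideanSpace ℝ (Fin n))) with hA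
  have hxA : x ∈ A := subset_affineSpan ℝ _ (by simp)
  have hrA : RU x ∈ A := subset_affineSpan ℝ _ (by simp)
  have hrrA : RV (RU x) ∈ A := subset_affineSpan ℝ _ (by simp)
  have hqA : CT x ∈ A := by
    rw [hCT x]; exact EuclideanGeometry.orthogonalProjection_mem _
  -- membership of the three points in U ⊔ V
  have hRUxS : RU x ∈ U ⊔ V := by
    rw [hRU' x]
    exact Submodule.sub_mem _ (Submodule.add_mem _ (Submodule.mem_sup_left (prL_mem U x))
      (Submodule.mem_sup_left (prL_mem U x))) hx
  have hRVRUxS : RV (RU x) ∈ U ⊔ V := by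
    rw [hRV' (RU x)]
    exact Submodule.sub_mem _ (Submodule.add_mem _ (Submodule.mem_sup_right (prL_mem V _))
      (Submodule.mem_sup_right (prL_mem V _))) hRUxS
  have hAle : A ≤ (U ⊔ V).toAffineSubspace := by
    rw [hA, affineSpan_le]
    intro z hz
    simp only [Set.mem_insert_iff, Set.mem_singleton_iff] at hz
    rcases hz with rfl | rfl | rfl
    · exact Submodule.mem_toAffineSubspace.2 hx
    · exact Submodule.mem_toAffineSubspace.2 hRUxS
    · exact Submodule.mem_toAffineSubspace.2 hRVRUxS
  have hCTS : CT x ∈ U ⊔ V := Submodule.mem_toAffineSubspace.1 (hAle hqA)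
  -- the affine span is contained in x + (U ⊓ V)ᗮ
  have hU1 : prL U x - x ∈ (U ⊓ V)ᗮ := by
    refine Submodule.orthogonal_le inf_le_left ?_
    rw [show prL U x - x = -(x - prL U x) from by abel]
    exact Submodule.neg_mem _ (sub_prL_mem U x)
  have horth1 : RU x - x ∈ (U ⊓ V)ᗮ := by
    rw [hRU' x, show prL U x + prL U x - x - x = (prL U x - x) + (prL U x - x) from by abel]
    exact Submodule.add_mem _ hU1 hU1
  have horth2 : RV (RU x) - x ∈ (U ⊓ V)ᗮ := by
    have hV1 : prL V (RU x) - RU x ∈ (U ⊓ V)ᗮ := by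
      refine Submodule.orthogonal_le inf_le_right ?_
      rw [show prL V (RU x) - RU x = -(RU x - prL V (RU x)) from by abel]
      exact Submodule.neg_mem _ (sub_prL_mem V (RU x))
    have h2 : RV (RU x) - RU x ∈ (U ⊓ V)ᗮ := by
      rw [hRV' (RU x), show prL V (RU x) + prL V (RU x) - RU x - RU x =
        (prL V (RU x) - RU x) + (prL V (RU x) - RU x) from by abel]
      exact Submodule.add_mem _ hV1 hV1
    rw [show RV (RU x) - x = (RV (RU x) - RU x) + (RU x - x) from by abel]
    exact Submodule.add_mem _ h2 horth1
  have hAle2 : A ≤ AffineSubspace.mk' x ((U ⊓ V)ᗮ) := by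
    rw [hA, affineSpan_le]
    intro z hz
    simp only [Set.mem_insert_iff, Set.mem_singleton_iff] at hz
    rcases hz with rfl | rfl | rfl
    · exact AffineSubspace.self_mem_mk' _ _
    · exact AffineSubspace.mem_mk'.2 (by rw [vsub_eq_sub]; exact horth1)
    · exact AffineSubspace.mem_mk'.2 (by rw [vsub_eq_sub]; exact horth2)
  have hpres : prL (U ⊓ V) (CT x) = p := by
    have h := AffineSubspace.mem_mk'.1 (hAle2 hqA)
    rw [vsub_eq_sub] at h
    have h0 : prL (U ⊓ V) (CT x - x) = 0 := prL_eq_zero _ h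
    rw [map_sub, ← hp] at h0
    exact sub_eq_zero.1 h0
  -- the Douglas–Rachford point lies in A
  set y := x - p with hy
  have hyS : y ∈ U ⊔ V := Submodule.sub_mem _ hx (Submodule.mem_sup_left hp_mem.1)
  have hy0 : prL (U ⊓ V) y = 0 := by
    rw [hy, map_sub, ← hp, prL_eq_self _ hp_mem, sub_self]
  set z := AffineMap.lineMap x (RV (RU x)) (1/2 : ℝ) with hz
  have hzA : z ∈ A := AffineMap.lineMap_mem _ hxA hrrA
  have hproj : (EuclideanGeometry.orthogonalProjection A p : EuclideanSpace ℝ (Fin n)) = CT x :=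
    (hCT x).symm
  have hmin : ‖CT x - p‖ ≤ ‖z - p‖ := by
    have h := EuclideanGeometry.dist_sq_eq_dist_orthogonalProjection_sq_add_dist_orthogonalProjection_sq
      (s := A) (p₁ := z) p hzA
    rw [show dist z (EuclideanGeometry.orthogonalProjection A p : EuclideanSpace ℝ (Fin n)) =
        dist z (CT x) from by rw [hproj],
      show dist p (EuclideanGeometry.orthogonalProjection A p : EuclideanSpace ℝ (Fin n)) =
        dist p (CT x) from by rw [hproj]] at h
    have h2 : dist p (CT x) ≤ dist z p := by
      nlinarith [dist_nonneg (x := z) (y := CT x), dist_nonneg (x := p) (y := CT x),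
        dist_nonneg (x := z) (y := p)]
    rw [show ‖CT x - p‖ = dist p (CT x) from by rw [dist_comm, dist_eq_norm],
      show ‖z - p‖ = dist z p from (dist_eq_norm z p).symm]
    exact h2
  -- identify z - p with the contraction expression
  have e1 : prL U p = p := prL_eq_self _ hp_mem.1
  have e2 : prL V p = p := prL_eq_self _ hp_mem.2
  have hd : RV (RU x) - x = (prL V (prL U x) + prL V (prL U x) - prL V x - prL U x) +
      (prL V (prL U x) + prL V (prL U x) - prL V x - prL U x) := by
    rw [hRV' (RU x), hRU' x,
      show prL V (prL U x + prL U x - x) = prL V (prL U x) + prL V (prL U x) - prL V x from by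
        rw [map_sub, map_add]]
    abel
  have hcontr_form : z - p = prL V (prL U y) + ((y - prL U y) - prL V (y - prL U y)) := by
    have r1 : prL U y = prL U x - p := by rw [hy, map_sub, e1]
    have r2 : prL V (prL U y) = prL V (prL U x) - p := by rw [r1, map_sub, e2]
    have r3 : prL V (y - prL U y) = prL V x - prL V (prL U x) := by
      rw [hy, r1, show x - p - (prL U x - p) = x - prL U x from by abel, map_sub]
    have hzx : z = (prL V (prL U x) + prL V (prL U x) - prL V x - prL U x) + x := by
      rw [hz, AffineMap.lineMap_apply, vsub_eq_sub, vadd_eq_add, hd,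
        show ∀ w : EuclideanSpace ℝ (Fin n), (1/2:ℝ) • (w + w) = w from fun w => by
          rw [← two_smul ℝ w, smul_smul]; norm_num]
    rw [r2, r3, r1, hy, hzx]
    abel
  have hfinal : ‖z - p‖ ≤ cF * ‖y‖ := by
    rw [hcontr_form]; exact DR_contraction U V cF hcF hyS hy0
  exact ⟨hCTS, hpres, le_trans hmin hfinal⟩
end

/-- Linear convergence of the Circumcentered–Douglas–Rachford method: if
`c_F = ‖P_V P_U - P_{U∩V}‖ < 1` is the cosine of the Friedrichs angle and `C_T` is the
circumcenter operator `C_T x = P_{aff{x, R_U x, R_V R_U x}}(P_{U∩V} x)`, then for any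
`x ∈ U + V` and all `k`, `‖C_T^[k] x - P_{U∩V} x‖ ≤ c_F ^ k * ‖x - P_{U∩V} x‖`. -/
theorem CDRM_linear_convergence (n : ℕ) (U V : Submodule ℝ (EuclideanSpace ℝ (Fin n)))
    (cF : ℝ)
    (hcF : cF = ‖(V.subtypeL ∘L Submodule.orthogonalProjection V) ∘L
        (U.subtypeL ∘L Submodule.orthogonalProjection U) -
        ((U ⊓ V).subtypeL ∘L Submodule.orthogonalProjection (U ⊓ V))‖)
    (hcF1 : cF < 1)
    (RU RV CT : EuclideanSpace ℝ (Fin n) → EuclideanSpace ℝ (Fin n))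
    (hRU : ∀ w, RU w = 2 • (Submodule.orthogonalProjection U w : EuclideanSpace ℝ (Fin n)) - w)
    (hRV : ∀ w, RV w = 2 • (Submodule.orthogonalProjection V w : EuclideanSpace ℝ (Fin n)) - w)
    (hCT : ∀ w, CT w =
      (EuclideanGeometry.orthogonalProjection (affineSpan ℝ {w, RU w, RV (RU w)})
        ((Submodule.orthogonalProjection (U ⊓ V) w : EuclideanSpace ℝ (Fin n))) :
        EuclideanSpace ℝ (Fin n)))
    (x : EuclideanSpace ℝ (Fin n)) (hx : x ∈ U ⊔ V) (k : ℕ) :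
    ‖CT^[k] x - (Submodule.orthogonalProjection (U ⊓ V) x : EuclideanSpace ℝ (Fin n))‖ ≤
      cF ^ k * ‖x - (Submodule.orthogonalProjection (U ⊓ V) x : EuclideanSpace ℝ (Fin n))‖ := by
  have hcF' : cF = ‖DRop U V‖ := hcF
  have hcF0 : 0 ≤ cF := hcF' ▸ norm_nonneg _
  have key : ∀ k : ℕ, CT^[k] x ∈ U ⊔ V ∧ prL (U ⊓ V) (CT^[k] x) = prL (U ⊓ V) x ∧
      ‖CT^[k] x - prL (U ⊓ V) x‖ ≤ cF ^ k * ‖x - prL (U ⊓ V) x‖ := by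
    intro k
    induction k with
    | zero => exact ⟨hx, rfl, by simp⟩
    | succ k ih =>
      obtain ⟨h1, h2, h3⟩ := ih
      obtain ⟨s1, s2, s3⟩ := CDRM_step n U V cF hcF' RU RV CT hRU hRV hCT h1
      rw [Function.iterate_succ_apply']
      refine ⟨s1, by rw [s2, h2], ?_⟩
      rw [h2] at s3
      calc ‖CT (CT^[k] x) - prL (U ⊓ V) x‖ ≤ cF * ‖CT^[k] x - prL (U ⊓ V) x‖ := s3
        _ ≤ cF * (cF ^ k * ‖x - prL (U ⊓ V) x‖) :=
          mul_le_mul_of_nonneg_left h3 hcF0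
        _ = cF ^ (k + 1) * ‖x - prL (U ⊓ V) x‖ := by ring
  exact (key k).2.2
end
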